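/- Let φ : U → ℝ be smooth on an open set U ⊆ ℝⁿ with positive-definite Hessian, g_{ij} := ∂_i∂_j φ, and define G_{ij}(z) := g_{ij}(Re z) on the tube domain T_U. Then the Chern curvature tensor of the Kähler metric G satisfies, for all z ∈ T_U and all indices i,j,k,l: R^T_{i j̄ k l̄}(z) := −∂²G_{ij}/∂z^k∂z̄^l (z) + Σ_{p,q} g^{pq}(Re z) · (∂G_{iq}/∂z^k)(z) · (∂G_{pj}/∂z̄^l)(z) = −½ Q_{ijkl}(Re z), where Q_{ijkl} := ½ ∂_i∂_j∂_k∂_l φ − ½ Σ_{p,q} g^{pq} (∂_i∂_k∂_p φ)(∂_j∂_l∂_q φ) is the Hessian curvature tensor. -/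

import Mathlib

open Set Matrix

/-- Partial derivative in the `i`-th coordinate direction of a function on `ℝⁿ`. -/
noncomputable def pd (n : ℕ) (i : Fin n) (f : (Fin n → ℝ) → ℝ) (x : Fin n → ℝ) : ℝ :=
  fderiv ℝ f x (Pi.single i 1)

/-- The real part map `ℂⁿ → ℝⁿ` (the projection `π` of the tube domain). -/
def rePart (n : ℕ) (z : Fin n → ℂ) : Fin n → ℝ := fun k => (z k).re

/-- Wirtinger derivative `∂f/∂z^j = ½(∂f/∂x^j - i ∂f/∂y^j)`. -/
noncomputable def wdz (n : ℕ) (j : Fin n) (f : (Fin n → ℂ) → ℂ) (z : Fin n → ℂ) : ℂ :=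
  (1/2 : ℂ) * (fderiv ℝ f z (Pi.single j 1)
    - Complex.I * fderiv ℝ f z (Pi.single j Complex.I))

/-- Wirtinger derivative `∂f/∂z̄^j = ½(∂f/∂x^j + i ∂f/∂y^j)`. -/
noncomputable def wdzbar (n : ℕ) (j : Fin n) (f : (Fin n → ℂ) → ℂ) (z : Fin n → ℂ) : ℂ :=
  (1/2 : ℂ) * (fderiv ℝ f z (Pi.single j 1)
    + Complex.I * fderiv ℝ f z (Pi.single j Complex.I))

section Aux

open Filter Topology

variable {n : ℕ} {U : Set (Fin n → ℝ)} {f : (Fin n → ℝ) → ℝ} {x : Fin n → ℝ}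

lemma pd_contDiffOn (hU : IsOpen U) (hf : ContDiffOn ℝ (⊤:ℕ∞) f U) (i : Fin n) :
    ContDiffOn ℝ (⊤:ℕ∞) (pd n i f) U := by
  have h := hf.fderiv_of_isOpen hU (m := ((⊤:ℕ∞) : WithTop ℕ∞)) (by simp)
  exact (ContinuousLinearMap.apply ℝ ℝ (Pi.single i (1:ℝ))).contDiff.comp_contDiffOn h

lemma pd_diffAt (hU : IsOpen U) (hf : ContDiffOn ℝ (⊤:ℕ∞) f U) (hx : x ∈ U) :
    DifferentiableAt ℝ f x :=
  (hf.contDiffAt (hU.mem_nhds hx)).differentiableAt (by simp)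

lemma pd_congrU (hU : IsOpen U) {f₁ f₂ : (Fin n → ℝ) → ℝ} (h : ∀ y ∈ U, f₁ y = f₂ y)
    (hx : x ∈ U) (a : Fin n) : pd n a f₁ x = pd n a f₂ x := by
  unfold pd
  rw [Filter.EventuallyEq.fderiv_eq (Filter.eventuallyEq_of_mem (hU.mem_nhds hx) h)]

lemma pd_swap (hU : IsOpen U) (hf : ContDiffOn ℝ (⊤:ℕ∞) f U) (a b : Fin n)
    (hx : x ∈ U) : pd n a (pd n b f) x = pd n b (pd n a f) x := by
  have hsym : IsSymmSndFDerivAt ℝ f x :=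
    (hf.contDiffAt (hU.mem_nhds hx)).isSymmSndFDerivAt (by simp [minSmoothness_of_isRCLikeNormedField]; exact WithTop.coe_le_coe.mpr le_top)
  have hdiff : DifferentiableAt ℝ (fderiv ℝ f) x :=
    ((hf.fderiv_of_isOpen hU (m := ((⊤:ℕ∞) : WithTop ℕ∞)) (by simp)).contDiffAt
      (hU.mem_nhds hx)).differentiableAt (by simp)
  have key : ∀ c d : Fin n, pd n c (pd n d f) x
      = fderiv ℝ (fderiv ℝ f) x (Pi.single c 1) (Pi.single d 1) := by
    intro c d
    unfold pd
    rw [fderiv_clm_apply hdiff (differentiableAt_const _)]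
    simp
  rw [key, key, hsym.eq]

/-- `rePart` as a continuous `ℝ`-linear map. -/
noncomputable def reCLMn (n : ℕ) : ((Fin n → ℂ)) →L[ℝ] (Fin n → ℝ) :=
  ContinuousLinearMap.pi fun k => Complex.reCLM.comp (ContinuousLinearMap.proj k)

lemma reCLMn_apply (z : Fin n → ℂ) : reCLMn n z = rePart n z := rfl

lemma rePart_single_one (k : Fin n) : rePart n (Pi.single k (1:ℂ)) = Pi.single k (1:ℝ) := by
  funext m
  simp [rePart, Pi.single_apply, apply_ite Complex.re]

lemma rePart_single_I (k : Fin n) : rePart n (Pi.single k Complex.I) = 0 := by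
  funext m
  simp [rePart, Pi.single_apply, apply_ite Complex.re]

lemma hasFDeriv_comp (c : ℂ) (f : (Fin n → ℝ) → ℝ) (z : Fin n → ℂ)
    (hf : DifferentiableAt ℝ f (rePart n z)) :
    HasFDerivAt (fun w => c * ((f (rePart n w) : ℝ) : ℂ))
      (((c • Complex.ofRealCLM).comp (fderiv ℝ f (rePart n z))).comp (reCLMn n)) z := by
  have h1 : HasFDerivAt (reCLMn n) (reCLMn n) z := (reCLMn n).hasFDerivAt
  have h2 : HasFDerivAt f (fderiv ℝ f (rePart n z)) (reCLMn n z) := hf.hasFDerivAt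
  have h3 : HasFDerivAt (fun r : ℝ => c * (r:ℂ)) (c • Complex.ofRealCLM)
      (f (reCLMn n z)) := by
    have := (c • Complex.ofRealCLM).hasFDerivAt (x := f (reCLMn n z))
    convert this using 1
    funext r
    simp [smul_eq_mul]
  exact h3.comp z (h2.comp z h1)

lemma wdz_comp (c : ℂ) (f : (Fin n → ℝ) → ℝ) (z : Fin n → ℂ)
    (hf : DifferentiableAt ℝ f (rePart n z)) (k : Fin n) :
    wdz n k (fun w => c * ((f (rePart n w) : ℝ) : ℂ)) z
      = c * (1/2) * ((pd n k f (rePart n z) : ℝ) : ℂ) := by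
  unfold wdz
  rw [(hasFDeriv_comp c f z hf).fderiv]
  simp [reCLMn_apply, rePart_single_one, rePart_single_I, pd, smul_eq_mul]
  ring

lemma wdzbar_comp (c : ℂ) (f : (Fin n → ℝ) → ℝ) (z : Fin n → ℂ)
    (hf : DifferentiableAt ℝ f (rePart n z)) (k : Fin n) :
    wdzbar n k (fun w => c * ((f (rePart n w) : ℝ) : ℂ)) z
      = c * (1/2) * ((pd n k f (rePart n z) : ℝ) : ℂ) := by
  unfold wdzbar
  rw [(hasFDeriv_comp c f z hf).fderiv]
  simp [reCLMn_apply, rePart_single_one, rePart_single_I, pd, smul_eq_mul]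
  ring

lemma wdz_congr {f₁ f₂ : (Fin n → ℂ) → ℂ} {z : Fin n → ℂ} (h : f₁ =ᶠ[nhds z] f₂) (k : Fin n) :
    wdz n k f₁ z = wdz n k f₂ z := by
  unfold wdz; rw [h.fderiv_eq]

end Aux

/-- for a Hessian metric `g = D²φ` on open `U ⊆ ℝⁿ` and the Kähler metric
`G_{ij}(z) := g_{ij}(Re z)` on the tube domain, the Chern curvature tensor satisfies
`R^T_{ij̄kl̄}(z) = -∂²G_{ij}/∂z^k∂z̄^l + Σ_{p,q} g^{pq}(Re z) (∂G_{iq}/∂z^k)(∂G_{pj}/∂z̄^l)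
              = -½ Q_{ijkl}(Re z)`, where `Q` is the Hessian curvature tensor. -/
theorem stmt10
    (n : ℕ) (hn : 1 ≤ n) (U : Set (Fin n → ℝ)) (hU : IsOpen U) (hUne : U.Nonempty)
    (φ : (Fin n → ℝ) → ℝ)
    (hφ : ContDiffOn ℝ (⊤ : ℕ∞) φ U)
    -- the Hessian metric `g_{ij} = ∂_i∂_j φ`
    (g : (Fin n → ℝ) → Matrix (Fin n) (Fin n) ℝ)
    (hg : ∀ x, g x = Matrix.of (fun i j : Fin n => pd n i (pd n j φ) x))
    (hpos : ∀ x ∈ U, (g x).PosDef)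
    -- `G_{ij}(z) := g_{ij}(Re z)`
    (G : Fin n → Fin n → (Fin n → ℂ) → ℂ)
    (hG : ∀ i j : Fin n, ∀ w, G i j w = ((g (rePart n w) i j : ℝ) : ℂ))
    -- `Q_{ijkl} := ½ ∂_i∂_j∂_k∂_l φ - ½ Σ_{p,q} g^{pq} (∂_i∂_k∂_p φ)(∂_j∂_l∂_q φ)`
    (Q : Fin n → Fin n → Fin n → Fin n → (Fin n → ℝ) → ℝ)
    (hQ : ∀ i j k l : Fin n, ∀ x, Q i j k l x =
      (1/2 : ℝ) * pd n i (pd n j (pd n k (pd n l φ))) x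
        - (1/2 : ℝ) * ∑ p : Fin n, ∑ q : Fin n, (g x)⁻¹ p q *
            (pd n i (pd n k (pd n p φ)) x) * (pd n j (pd n l (pd n q φ)) x)) :
    ∀ z : Fin n → ℂ, rePart n z ∈ U → ∀ i j k l : Fin n,
      -(wdz n k (fun w => wdzbar n l (G i j) w) z)
        + ∑ p : Fin n, ∑ q : Fin n,
            (((g (rePart n z))⁻¹ p q : ℝ) : ℂ) * wdz n k (G i q) z * wdzbar n l (G p j) z
      = ((-(1/2 : ℝ) * Q i j k l (rePart n z) : ℝ) : ℂ) := by
  intro z hx i j k l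
  set x := rePart n z with hxdef
  have h1 : ∀ a : Fin n, ContDiffOn ℝ (⊤:ℕ∞) (pd n a φ) U := fun a => pd_contDiffOn hU hφ a
  have h2 : ∀ a b : Fin n, ContDiffOn ℝ (⊤:ℕ∞) (pd n a (pd n b φ)) U :=
    fun a b => pd_contDiffOn hU (h1 b) a
  have h3 : ∀ a b c : Fin n, ContDiffOn ℝ (⊤:ℕ∞) (pd n a (pd n b (pd n c φ))) U :=
    fun a b c => pd_contDiffOn hU (h2 b c) a
  have hGfun : ∀ a b : Fin n, G a b
      = fun w => (1:ℂ) * ((pd n a (pd n b φ) (rePart n w) : ℝ) : ℂ) := by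
    intro a b; funext w; rw [hG, hg]; simp
  -- Term 2
  have hT2 : ∀ q : Fin n, wdz n k (G i q) z
      = (1/2 : ℂ) * ((pd n k (pd n i (pd n q φ)) x : ℝ) : ℂ) := by
    intro q
    rw [hGfun i q, wdz_comp 1 _ z (pd_diffAt hU (h2 i q) hx) k]
    ring
  -- Term 3
  have hT3 : ∀ p : Fin n, wdzbar n l (G p j) z
      = (1/2 : ℂ) * ((pd n l (pd n p (pd n j φ)) x : ℝ) : ℂ) := by
    intro p
    rw [hGfun p j, wdzbar_comp 1 _ z (pd_diffAt hU (h2 p j) hx) l]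
    ring
  -- Term 1
  have hTube : IsOpen {w : Fin n → ℂ | rePart n w ∈ U} :=
    hU.preimage (reCLMn n).continuous
  have hev : (fun w => wdzbar n l (G i j) w) =ᶠ[nhds z]
      (fun w => (1/2 : ℂ) * ((pd n l (pd n i (pd n j φ)) (rePart n w) : ℝ) : ℂ)) := by
    filter_upwards [hTube.mem_nhds (show z ∈ _ from hx)] with w hw
    rw [hGfun i j, wdzbar_comp 1 _ w (pd_diffAt hU (h2 i j) hw) l]
    ring
  have hT1 : wdz n k (fun w => wdzbar n l (G i j) w) z
      = (1/4 : ℂ) * ((pd n k (pd n l (pd n i (pd n j φ))) x : ℝ) : ℂ) := by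
    rw [wdz_congr hev k, wdz_comp (1/2 : ℂ) _ z (pd_diffAt hU (h3 l i j) hx) k]
    ring
  -- symmetry of g and its inverse
  have hgsymm : (g x)ᵀ = g x := by
    ext a b
    rw [hg]
    simp only [Matrix.transpose_apply, Matrix.of_apply]
    exact pd_swap hU hφ b a hx
  have hinvT : ((g x)⁻¹)ᵀ = (g x)⁻¹ := by
    rw [Matrix.transpose_nonsing_inv, hgsymm]
  have hinv : ∀ p q : Fin n, (g x)⁻¹ q p = (g x)⁻¹ p q := by
    intro p q
    conv_lhs => rw [← hinvT]
    rfl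
  have hB : ∀ p : Fin n, pd n k (pd n i (pd n p φ)) x = pd n i (pd n k (pd n p φ)) x :=
    fun p => pd_swap hU (h1 p) k i hx
  have hC : ∀ q : Fin n, pd n l (pd n q (pd n j φ)) x = pd n j (pd n l (pd n q φ)) x := by
    intro q
    have e1 : pd n l (pd n q (pd n j φ)) x = pd n l (pd n j (pd n q φ)) x :=
      pd_congrU hU (fun y hy => pd_swap hU hφ q j hy) hx l
    rw [e1]
    exact pd_swap hU (h1 q) l j hx
  have hA : pd n k (pd n l (pd n i (pd n j φ))) x = pd n i (pd n j (pd n k (pd n l φ))) x := by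
    have e1 : pd n k (pd n l (pd n i (pd n j φ))) x
        = pd n k (pd n i (pd n l (pd n j φ))) x :=
      pd_congrU hU (fun y hy => pd_swap hU (h1 j) l i hy) hx k
    have e2 : pd n k (pd n i (pd n l (pd n j φ))) x
        = pd n i (pd n k (pd n l (pd n j φ))) x :=
      pd_swap hU (h2 l j) k i hx
    have e3 : pd n i (pd n k (pd n l (pd n j φ))) x
        = pd n i (pd n k (pd n j (pd n l φ))) x :=
      pd_congrU hU
        (fun y hy => pd_congrU hU (fun t ht => pd_swap hU hφ l j ht) hy k) hx i
    have e4 : pd n i (pd n k (pd n j (pd n l φ))) x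
        = pd n i (pd n j (pd n k (pd n l φ))) x :=
      pd_congrU hU (fun y hy => pd_swap hU (h1 l) k j hy) hx i
    rw [e1, e2, e3, e4]
  -- the real identity
  have key : -((1/4 : ℝ) * pd n k (pd n l (pd n i (pd n j φ))) x)
      + ∑ p : Fin n, ∑ q : Fin n, (g x)⁻¹ p q
          * ((1/2 : ℝ) * pd n k (pd n i (pd n q φ)) x)
          * ((1/2 : ℝ) * pd n l (pd n p (pd n j φ)) x)
      = -(1/2 : ℝ) * Q i j k l x := by
    have hsum : (∑ p : Fin n, ∑ q : Fin n, (g x)⁻¹ p q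
          * ((1/2 : ℝ) * pd n k (pd n i (pd n q φ)) x)
          * ((1/2 : ℝ) * pd n l (pd n p (pd n j φ)) x))
        = ∑ p : Fin n, ∑ q : Fin n, (1/4 : ℝ) * ((g x)⁻¹ p q
            * pd n i (pd n k (pd n p φ)) x * pd n j (pd n l (pd n q φ)) x) := by
      rw [Finset.sum_comm]
      refine Finset.sum_congr rfl fun p _ => ?_
      refine Finset.sum_congr rfl fun q _ => ?_
      rw [hinv p q, hB p, hC q]
      ring
    rw [hsum, hQ, hA]
    simp only [← Finset.mul_sum]
    ring
  -- assemble
  rw [hT1]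
  simp only [hT2, hT3]
  rw [← key]
  push_cast
  ring
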